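/- Let T be a finite rooted tree whose nodes are labelled by elements of a type of goals. If some node of T has the same label as one of its proper ancestors, then there exists a finite rooted tree T' with the same root label such that no node of T' has the same label as any of its proper ancestors, and every node label occurring in T' occurs in T. -/
import Mathlib


inductive LTree (α : Type*) : Type _
  | node : α → List (LTree α) → LTree α

def LTree.rootLabel {α : Type*} : LTree α → α
  | .node a _ => a

/-- `a` is a label occurring somewhere in the tree. -/
inductive LTree.HasLabel {α : Type*} (a : α) : LTree α → Prop
  | here (cs : List (LTree α)) : LTree.HasLabel a (.node a cs)
  | child (b : α) (cs : List (LTree α)) (t : LTree α) :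
      t ∈ cs → LTree.HasLabel a t → LTree.HasLabel a (.node b cs)

/-- The tree, placed below the ancestor-label list `anc`, has no node whose label
repeats one of its proper ancestors' labels. -/
inductive LTree.GoodFrom {α : Type*} : List α → LTree α → Prop
  | node (anc : List α) (a : α) (cs : List (LTree α)) :
      a ∉ anc → (∀ t ∈ cs, LTree.GoodFrom (a :: anc) t) → LTree.GoodFrom anc (.node a cs)

lemma LTree.hasLabel_subtree {α : Type*} {a : α} {t : LTree α} (h : t.HasLabel a) :
    ∃ s : LTree α, s.rootLabel = a ∧ sizeOf s ≤ sizeOf t ∧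
      ∀ b, s.HasLabel b → t.HasLabel b := by
  induction h with
  | here cs => exact ⟨.node a cs, rfl, le_refl _, fun _ => id⟩
  | child b cs t ht _ ih =>
    obtain ⟨s, hr, hs, hl⟩ := ih
    refine ⟨s, hr, ?_, fun c hc => .child b cs t ht (hl c hc)⟩
    have : sizeOf t < sizeOf (LTree.node b cs) := by
      have := List.sizeOf_lt_of_mem ht
      simp only [LTree.node.sizeOf_spec]
      omega
    omega

lemma LTree.main {α : Type*} (T : LTree α) : ∃ T' : LTree α,
    T'.rootLabel = T.rootLabel ∧ (∀ b, T'.HasLabel b → T.HasLabel b) ∧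
    (∀ anc : List α, (∀ b ∈ anc, ¬ T'.HasLabel b) → T'.GoodFrom anc) := by
  obtain ⟨a, cs⟩ := T
  by_cases hx : ∃ t ∈ cs, t.HasLabel a
  · -- the root label repeats below: take the deeper subtree and recurse
    obtain ⟨t, ht, hlab⟩ := hx
    obtain ⟨s, hsr, hss, hsl⟩ := LTree.hasLabel_subtree hlab
    have hlt : sizeOf s < 1 + sizeOf cs := by
      have := List.sizeOf_lt_of_mem ht
      omega
    obtain ⟨T', h1, h2, h3⟩ := LTree.main s
    exact ⟨T', by rw [h1, hsr]; rfl, fun b hb => .child a cs t ht (hsl b (h2 b hb)), h3⟩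
  · -- root label does not repeat: recurse on children
    push_neg at hx
    have key : ∀ t ∈ cs, ∃ t' : LTree α,
        (∀ b, t'.HasLabel b → t.HasLabel b) ∧
        (∀ anc : List α, (∀ b ∈ anc, ¬ t'.HasLabel b) → t'.GoodFrom anc) := by
      intro t ht
      have : sizeOf t < 1 + sizeOf cs := List.sizeOf_lt_of_mem ht |>.trans_le (by omega)
      obtain ⟨t', _, h2, h3⟩ := LTree.main t
      exact ⟨t', h2, h3⟩
    choose f hf1 hf2 using key
    refine ⟨.node a (cs.attach.map fun t => f t.1 t.2), rfl, ?_, ?_⟩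
    · intro b hb
      cases hb with
      | here => exact .here cs
      | child _ _ t' ht' hb =>
        simp only [List.mem_map, List.mem_attach] at ht'
        obtain ⟨⟨t, ht⟩, _, rfl⟩ := ht'
        exact .child a cs t ht (hf1 t ht b hb)
    · intro anc hanc
      refine .node anc a _ (fun hmem => hanc a hmem (.here _)) ?_
      intro t' ht'
      simp only [List.mem_map, List.mem_attach] at ht'
      obtain ⟨⟨t, ht⟩, _, rfl⟩ := ht'
      apply hf2 t ht
      intro b hb
      rcases List.mem_cons.mp hb with rfl | hb'
      · exact fun hbl => hx t ht (hf1 t ht b hbl)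
      · exact fun hbl => hanc b hb' (.child a _ (f t ht)
          (List.mem_map.mpr ⟨⟨t, ht⟩, List.mem_attach _ _, rfl⟩) hbl)
termination_by sizeOf T
decreasing_by all_goals (simp only [LTree.node.sizeOf_spec]; omega)

theorem stmt_13 {α : Type*} (T : LTree α) (h : ¬ T.GoodFrom []) :
    ∃ T' : LTree α, T'.rootLabel = T.rootLabel ∧ T'.GoodFrom [] ∧
      ∀ a : α, T'.HasLabel a → T.HasLabel a := by
  obtain ⟨T', h1, h2, h3⟩ := LTree.main T
  exact ⟨T', h1, h3 [] (by simp), h2⟩
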